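/- Let (M_n) be a locally square integrable real martingale with M_0 = 0 that is heavy on left. Then for all x > 0, y > 0, a ≥ 0 and b > 0, P(M_n/(a + b[M]_n) ≥ x and [M]_n ≥ y) ≤ exp(−x²(ab + b²y/2)). -/

import Mathlib

open MeasureTheory ProbabilityTheory Real Finset

/-- The truncated version `T_a(x) = min(|x|, a) · sign(x)` of a real number. -/
noncomputable def truncAt (a : ℝ) (x : ℝ) : ℝ := min |x| a * Real.sign x

/-- A martingale `M` is heavy on left if all its increments are conditionally heavy on left:
for all `n ≥ 1` and all `a > 0`, `E[T_a(ΔM_n) | ℱ_{n−1}] ≤ 0` almost surely. -/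
def Martingale.IsHeavyOnLeft {Ω : Type*} {m0 : MeasurableSpace Ω} (μ : Measure Ω)
    (ℱ : Filtration ℕ m0) (M : ℕ → Ω → ℝ) : Prop :=
  ∀ n : ℕ, 1 ≤ n → ∀ a : ℝ, 0 < a →
    ∀ᵐ ω ∂μ, (μ[fun ω' => truncAt a (M n ω' - M (n - 1) ω') | ℱ (n - 1)]) ω ≤ 0

section Aux

noncomputable def gfun (u : ℝ) : ℝ := Real.exp (u - u^2/2) - 1

lemma expArg_le_half (w : ℝ) : w - w^2/2 ≤ 1/2 := by nlinarith [sq_nonneg (w-1)]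

lemma gfun_zero : gfun 0 = 0 := by simp [gfun]

lemma hasDerivAt_inner (u : ℝ) : HasDerivAt (fun v : ℝ => v - v^2/2) (1 - u) u := by
  have h1 : HasDerivAt (fun v : ℝ => v^2) (2*u) u := by
    simpa using hasDerivAt_pow 2 u
  have := (hasDerivAt_id u).sub (h1.div_const 2)
  simp at this
  exact this

lemma hasDerivAt_gfun (u : ℝ) : HasDerivAt gfun ((1 - u) * Real.exp (u - u^2/2)) u := by
  have := ((Real.hasDerivAt_exp (u - u^2/2)).comp u (hasDerivAt_inner u)).sub_const 1
  unfold gfun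
  simpa [mul_comm] using this

lemma hasDerivAt_gfun' (u : ℝ) :
    HasDerivAt (fun v => (1 - v) * Real.exp (v - v^2/2)) ((u^2 - 2*u) * Real.exp (u - u^2/2)) u := by
  have h1 : HasDerivAt (fun v : ℝ => 1 - v) (-1) u := by
    have := (hasDerivAt_const u (1:ℝ)).sub (hasDerivAt_id u)
    simp at this
    exact this
  have h2 : HasDerivAt (fun v : ℝ => Real.exp (v - v^2/2)) (Real.exp (u - u^2/2) * (1 - u)) u :=
    (Real.hasDerivAt_exp (u - u^2/2)).comp (h₂ := Real.exp) u (hasDerivAt_inner u)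
  have := h1.mul h2
  exact this.congr_deriv (by ring)

lemma gfun_concaveOn : ConcaveOn ℝ (Set.Icc (0:ℝ) 1) gfun := by
  apply concaveOn_of_hasDerivWithinAt2_nonpos (f' := fun u => (1 - u) * Real.exp (u - u^2/2))
    (f'' := fun u => (u^2 - 2*u) * Real.exp (u - u^2/2)) (convex_Icc 0 1)
  · exact fun u _ => (hasDerivAt_gfun u).continuousAt.continuousWithinAt
  · exact fun u _ => (hasDerivAt_gfun u).hasDerivWithinAt
  · exact fun u _ => (hasDerivAt_gfun' u).hasDerivWithinAt
  · intro u hu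
    rw [interior_Icc] at hu
    have : u^2 - 2*u ≤ 0 := by nlinarith [hu.1.le, hu.2.le]
    exact mul_nonpos_of_nonpos_of_nonneg this (Real.exp_pos _).le

lemma gfun_deriv_eq : deriv gfun = fun u => (1 - u) * Real.exp (u - u^2/2) :=
  funext fun u => (hasDerivAt_gfun u).deriv

lemma gfun_monotoneOn : MonotoneOn gfun (Set.Icc (0:ℝ) 1) := by
  apply monotoneOn_of_deriv_nonneg (convex_Icc 0 1)
  · exact fun u _ => (hasDerivAt_gfun u).continuousAt.continuousWithinAt
  · exact fun u _ => (hasDerivAt_gfun u).differentiableAt.differentiableWithinAt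
  · intro u hu
    rw [interior_Icc] at hu
    rw [gfun_deriv_eq]
    have : (0:ℝ) ≤ 1 - u := by linarith [hu.2]
    positivity

/-- `gfun` is 1-Lipschitz upward on `[0,1]`. -/
lemma gfun_lipschitz {w v : ℝ} (h0 : 0 ≤ w) (hwv : w ≤ v) (h1 : v ≤ 1) :
    gfun v - gfun w ≤ v - w := by
  have hanti : AntitoneOn (fun u => gfun u - u) (Set.Icc (0:ℝ) 1) := by
    apply antitoneOn_of_deriv_nonpos (convex_Icc 0 1)
    · exact fun u _ => ((hasDerivAt_gfun u).sub (hasDerivAt_id u)).continuousAt.continuousWithinAt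
    · exact fun u _ => ((hasDerivAt_gfun u).sub (hasDerivAt_id u)).differentiableAt.differentiableWithinAt
    · intro u hu
      rw [interior_Icc] at hu
      have hd : deriv (fun u => gfun u - u) u = (1 - u) * Real.exp (u - u^2/2) - 1 := by
        have := ((hasDerivAt_gfun u).sub (hasDerivAt_id u)).deriv
        exact this
      rw [hd]
      have h1u : (0:ℝ) < 1 - u := by linarith [hu.2]
      have e1 : (1 - u) ≤ Real.exp (-u) := by
        have := Real.add_one_le_exp (-u); linarith
      have e2 : (1-u) * Real.exp (u - u^2/2) ≤ Real.exp (-u) * Real.exp (u - u^2/2) :=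
        mul_le_mul_of_nonneg_right e1 (Real.exp_pos _).le
      rw [← Real.exp_add] at e2
      have e3 : Real.exp (-u + (u - u^2/2)) ≤ 1 := by
        rw [Real.exp_le_one_iff]
        nlinarith [sq_nonneg u]
      linarith
  have := hanti ⟨h0, hwv.trans h1⟩ ⟨h0.trans hwv, h1⟩ hwv
  simp only at this
  linarith

/-- `exp(w - w²/2) + exp(-w - w²/2) ≤ 2`. -/
lemma exp_add_exp_le_two (w : ℝ) : Real.exp (w - w^2/2) + Real.exp (-w - w^2/2) ≤ 2 := by
  have h := Real.cosh_le_exp_half_sq w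
  rw [Real.cosh_eq] at h
  have h2 : Real.exp (w - w^2/2) + Real.exp (-w - w^2/2)
      = (Real.exp w + Real.exp (-w)) * Real.exp (-(w^2/2)) := by
    rw [mul_comm, mul_add]
    rw [← Real.exp_add, ← Real.exp_add]
    ring_nf
  rw [h2]
  have hpos : (0:ℝ) < Real.exp (-(w^2/2)) := Real.exp_pos _
  have := mul_le_mul_of_nonneg_right (by linarith : Real.exp w + Real.exp (-w) ≤ 2 * Real.exp (w^2/2)) hpos.le
  calc (Real.exp w + Real.exp (-w)) * Real.exp (-(w^2/2))
      ≤ 2 * Real.exp (w^2/2) * Real.exp (-(w^2/2)) := this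
    _ = 2 := by rw [mul_assoc, ← Real.exp_add]; simp

/-- For `w ≥ 0`, `gfun (min w 1) ≤ 1 - exp (-w - w²/2)`. -/
lemma gfun_min_le (w : ℝ) (h0 : 0 ≤ w) : gfun (min w 1) ≤ 1 - Real.exp (-w - w^2/2) := by
  rcases le_or_gt w 1 with h | h
  · rw [min_eq_left h]
    have := exp_add_exp_le_two w
    simp only [gfun]
    linarith
  · rw [min_eq_right h.le]
    have h1 := exp_add_exp_le_two 1
    norm_num at h1
    have h2 : Real.exp (-w - w^2/2) ≤ Real.exp (-(3/2) : ℝ) := by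
      apply Real.exp_le_exp.2; nlinarith
    have hg : gfun 1 = Real.exp (1/2) - 1 := by norm_num [gfun]
    rw [hg]; linarith

lemma gfun_le_gfun_one (u : ℝ) : gfun u ≤ gfun 1 := by
  simp only [gfun]
  have := expArg_le_half u
  have : Real.exp (u - u^2/2) ≤ Real.exp (1 - 1^2/2) := by
    apply Real.exp_le_exp.2; norm_num; linarith
  linarith



lemma truncAt_of_nonneg {a x : ℝ} (ha : 0 ≤ a) (hx : 0 ≤ x) : truncAt a x = min x a := by
  rcases eq_or_lt_of_le hx with h | h
  · simp [truncAt, ← h, Real.sign_zero, min_eq_left ha]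
  · rw [truncAt, Real.sign_of_pos h, abs_of_pos h, mul_one]

lemma truncAt_of_neg {a x : ℝ} (hx : x < 0) : truncAt a x = -(min (-x) a) := by
  rw [truncAt, Real.sign_of_neg hx, abs_of_neg hx]
  ring

lemma truncAt_zero (x : ℝ) : truncAt 0 x = 0 := by
  rcases lt_trichotomy x 0 with h | h | h
  · rw [truncAt_of_neg h]
    have : min (-x) 0 = 0 := min_eq_right (by linarith)
    rw [this]; ring
  · simp [truncAt, h]
  · rw [truncAt_of_nonneg le_rfl h.le]; simp [h.le]

lemma abs_truncAt_le (a x : ℝ) (ha : 0 ≤ a) : |truncAt a x| ≤ a := by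
  rcases lt_trichotomy x 0 with h | h | h
  · rw [truncAt_of_neg h, abs_neg, abs_of_nonneg (le_min (by linarith) ha)]
    exact min_le_right _ _
  · simp [truncAt, h, ha]
  · rw [truncAt_of_nonneg ha h.le, abs_of_nonneg (le_min h.le ha)]
    exact min_le_right _ _

lemma real_mul_min (t p q : ℝ) (ht : 0 ≤ t) : t * min p q = min (t * p) (t * q) := by
  rcases le_total p q with h | h
  · rw [min_eq_left h, min_eq_left (mul_le_mul_of_nonneg_left h ht)]
  · rw [min_eq_right h, min_eq_right (mul_le_mul_of_nonneg_left h ht)]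

lemma truncAt_mul {t a x : ℝ} (ht : 0 < t) (ha : 0 ≤ a) :
    truncAt a (t * x) = t * truncAt (a / t) x := by
  have hat : 0 ≤ a / t := by positivity
  have key : ∀ y : ℝ, 0 ≤ y → min (t * y) a = t * min y (a / t) := by
    intro y hy
    rw [real_mul_min _ _ _ ht.le, mul_div_cancel₀ _ ht.ne']
  rcases lt_trichotomy x 0 with h | h | h
  · have htx : t * x < 0 := mul_neg_of_pos_of_neg ht h
    rw [truncAt_of_neg htx, truncAt_of_neg h, show -(t * x) = t * (-x) by ring,
      key _ (by linarith)]
    ring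
  · simp [h, truncAt, Real.sign_zero]
  · have htx : 0 ≤ t * x := by positivity
    rw [truncAt_of_nonneg ha htx, truncAt_of_nonneg hat h.le, key _ h.le]

lemma measurable_truncAt (a : ℝ) : Measurable (truncAt a) := by
  have hs : Measurable Real.sign := by
    have : Real.sign = fun r : ℝ => if r < 0 then (-1:ℝ) else if 0 < r then 1 else 0 := by
      funext r; rfl
    rw [this]
    exact Measurable.ite (measurableSet_lt measurable_id measurable_const) measurable_const
      (Measurable.ite (measurableSet_lt measurable_const measurable_id) measurable_const
        measurable_const)
  exact ((measurable_id.abs.min measurable_const).mul hs)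



noncomputable def slopeF (m i : ℕ) : ℝ := m * (gfun ((i:ℝ)/m) - gfun (((i:ℝ)-1)/m))

section
variable (mono : MonotoneOn gfun (Set.Icc (0:ℝ) 1)) (conc : ConcaveOn ℝ (Set.Icc (0:ℝ) 1) gfun)

lemma node_mem {m i : ℕ} (hm : 1 ≤ m) (h1 : 1 ≤ i) (h2 : i ≤ m) :
    ((i:ℝ)-1)/m ∈ Set.Icc (0:ℝ) 1 ∧ (i:ℝ)/m ∈ Set.Icc (0:ℝ) 1 := by
  have hm0 : (0:ℝ) < m := by exact_mod_cast hm
  have hi1 : (1:ℝ) ≤ (i:ℝ) := by exact_mod_cast h1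
  have him : (i:ℝ) ≤ m := by exact_mod_cast h2
  refine ⟨⟨div_nonneg (by linarith) hm0.le, ?_⟩, ⟨div_nonneg (by linarith) hm0.le, ?_⟩⟩ <;>
    rw [div_le_one hm0] <;> linarith

include mono in
lemma slopeF_nonneg {m i : ℕ} (hm : 1 ≤ m) (h1 : 1 ≤ i) (h2 : i ≤ m) : 0 ≤ slopeF m i := by
  have hm0 : (0:ℝ) < m := by exact_mod_cast hm
  obtain ⟨hp, hq⟩ := node_mem hm h1 h2
  have := mono hp hq ((div_le_div_iff_of_pos_right hm0).2 (by linarith))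
  have : 0 ≤ gfun ((i:ℝ)/m) - gfun (((i:ℝ)-1)/m) := by linarith
  exact mul_nonneg hm0.le this

include conc in
lemma slopeF_antitone {m i : ℕ} (hm : 1 ≤ m) (h1 : 1 ≤ i) (h2 : i + 1 ≤ m) :
    slopeF m (i+1) ≤ slopeF m i := by
  have hm0 : (0:ℝ) < m := by exact_mod_cast hm
  obtain ⟨hp, _⟩ := node_mem hm h1 (by omega)
  obtain ⟨_, hq⟩ := node_mem hm (by omega : 1 ≤ i + 1) h2
  have hmid := conc.2 hp hq (by norm_num : (0:ℝ) ≤ 1/2) (by norm_num : (0:ℝ) ≤ 1/2) (by norm_num)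
  have hmeq : (1/2 : ℝ) • (((i:ℝ)-1)/m) + (1/2 : ℝ) • (((i:ℝ)+1)/m) = (i:ℝ)/m := by
    simp only [smul_eq_mul]; field_simp; ring
  push_cast at hmid
  rw [hmeq] at hmid
  simp only [smul_eq_mul] at hmid
  unfold slopeF
  push_cast
  have harg : ((i:ℝ)+1-1)/m = (i:ℝ)/m := by ring_nf
  rw [harg]
  nlinarith [hmid]

include conc in
lemma concave_chord {p q w : ℝ} (h0 : 0 ≤ p) (hpw : p ≤ w) (hwq : w ≤ q) (hq1 : q ≤ 1)
    (hpq : p < q) : (gfun q - gfun p) * (w - p) ≤ (gfun w - gfun p) * (q - p) := by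
  have hqp : 0 < q - p := by linarith
  have ha : (0:ℝ) ≤ (q - w)/(q - p) := div_nonneg (by linarith) hqp.le
  have hb : (0:ℝ) ≤ (w - p)/(q - p) := div_nonneg (by linarith) hqp.le
  have hab : (q - w)/(q - p) + (w - p)/(q - p) = 1 := by field_simp; ring
  have h := conc.2 (Set.mem_Icc.2 ⟨h0, by linarith⟩) (Set.mem_Icc.2 ⟨by linarith, hq1⟩) ha hb hab
  have hcomb : ((q - w)/(q - p)) • p + ((w - p)/(q - p)) • q = w := by
    simp only [smul_eq_mul]; field_simp; ring
  rw [hcomb] at h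
  simp only [smul_eq_mul] at h
  have h2 := mul_le_mul_of_nonneg_right h hqp.le
  have e1 : ((q - w)/(q - p) * gfun p + (w - p)/(q - p) * gfun q) * (q - p)
      = (q - w) * gfun p + (w - p) * gfun q := by field_simp
  rw [e1] at h2
  nlinarith [h2]

end

lemma sum_Icc_sub_telescope (F : ℕ → ℝ) (m : ℕ) :
    ∑ i ∈ Icc 1 m, (F i - F (i-1)) = F m - F 0 := by
  induction m with
  | zero => simp
  | succ m ih =>
    rw [Finset.sum_Icc_succ_top (by omega : 1 ≤ m+1), ih]
    simp

lemma abel_nonpos (m : ℕ) (s c : ℕ → ℝ) (hc0 : c 0 = 0)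
    (hc : ∀ i, 1 ≤ i → i ≤ m → c i ≤ 0)
    (hs : ∀ i, 1 ≤ i → i ≤ m → 0 ≤ s i)
    (hsa : ∀ i, 1 ≤ i → i + 1 ≤ m → s (i+1) ≤ s i) :
    ∑ i ∈ Icc 1 m, s i * (c i - c (i-1)) ≤ 0 := by
  have key : ∀ k, k ≤ m → ∑ i ∈ Icc 1 k, s i * (c i - c (i-1)) ≤ s k * c k := by
    intro k
    induction k with
    | zero => intro _ ; simp [hc0]
    | succ k ih =>
      intro hk
      rw [Finset.sum_Icc_succ_top (by omega : 1 ≤ k+1)]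
      rcases Nat.eq_zero_or_pos k with hk0 | hk1
      · subst hk0; simp [hc0]
      · have h1 := ih (by omega)
        have h2 := hsa k hk1 hk
        have h3 := hc k hk1 (by omega)
        have h4 := hs (k+1) (by omega) hk
        have : (k + 1 : ℕ) - 1 = k := by omega
        rw [this]
        nlinarith
  rcases Nat.eq_zero_or_pos m with h | h
  · subst h; simp
  · exact (key m le_rfl).trans (mul_nonpos_of_nonneg_of_nonpos (hs m h le_rfl) (hc m h le_rfl))

end Aux

/-- The key pointwise inequality. -/
lemma key_pointwise (m : ℕ) (hm : 1 ≤ m) (u : ℝ) :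
    Real.exp (u - u^2/2) ≤ 1 + 1/m +
      ∑ i ∈ Icc 1 m, slopeF m i * (truncAt ((i:ℝ)/m) u - truncAt (((i:ℝ)-1)/m) u) := by
  have hm0 : (0:ℝ) < m := by exact_mod_cast hm
  have hgu : Real.exp (u - u^2/2) = 1 + gfun u := by simp [gfun]
  rcases le_or_gt 0 u with hu | hu
  · set F : ℕ → ℝ := fun j => gfun (min u ((j:ℝ)/m)) with hF
    have hsum : ∑ i ∈ Icc 1 m, slopeF m i * (truncAt ((i:ℝ)/m) u - truncAt (((i:ℝ)-1)/m) u)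
        = ∑ i ∈ Icc 1 m, slopeF m i * (min u ((i:ℝ)/m) - min u (((i:ℝ)-1)/m)) := by
      apply Finset.sum_congr rfl
      intro i hi
      obtain ⟨h1, h2⟩ := Finset.mem_Icc.mp hi
      obtain ⟨hp, hq⟩ := node_mem hm h1 h2
      rw [truncAt_of_nonneg hq.1 hu, truncAt_of_nonneg hp.1 hu]
    rw [hgu, hsum]
    have tele := sum_Icc_sub_telescope F m
    have hF0 : F 0 = 0 := by
      simp only [hF, Nat.cast_zero, zero_div, min_eq_right hu]
      exact gfun_zero
    have hFm : gfun u ≤ F m := by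
      simp only [hF, div_self hm0.ne']
      rcases le_total u 1 with h | h
      · rw [min_eq_left h]
      · rw [min_eq_right h]; exact gfun_le_gfun_one u
    set i0 := Nat.floor ((m:ℝ) * u) + 1 with hi0
    have hstep : ∀ i ∈ Icc 1 m,
        (F i - F (i-1)) - slopeF m i * (min u ((i:ℝ)/m) - min u (((i:ℝ)-1)/m))
          ≤ if i = i0 then 1/(m:ℝ) else 0 := by
      intro i hi
      obtain ⟨h1, h2⟩ := Finset.mem_Icc.mp hi
      have hcast : ((i - 1 : ℕ) : ℝ) = (i:ℝ) - 1 := by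
        have := Nat.cast_sub (R := ℝ) h1; simpa using this
      obtain ⟨hp, hq⟩ := node_mem hm h1 h2
      have hnode : ((i:ℝ)-1)/m + 1/m = (i:ℝ)/m := by field_simp; ring
      by_cases hii : i = i0
      · rw [if_pos hii]
        have hmin1 : min u (((i:ℝ)-1)/m) ≤ min u ((i:ℝ)/m) :=
          min_le_min le_rfl ((div_le_div_iff_of_pos_right hm0).2 (by linarith))
        have h1m : 0 ≤ 1/(m:ℝ) := by positivity
        have hminle : min u ((i:ℝ)/m) ≤ min u (((i:ℝ)-1)/m) + 1/m := by
          rcases le_total u (((i:ℝ)-1)/m) with h | h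
          · rw [min_eq_left h]
            have : min u ((i:ℝ)/m) ≤ u := min_le_left _ _
            linarith
          · rw [min_eq_right h, ← hnode]
            exact min_le_right _ _
        have hlip : F i - F (i-1) ≤ min u ((i:ℝ)/m) - min u (((i:ℝ)-1)/m) := by
          simp only [hF, hcast]
          exact gfun_lipschitz (le_min hu hp.1) hmin1 (min_le_of_right_le hq.2)
        have hsl : 0 ≤ slopeF m i * (min u ((i:ℝ)/m) - min u (((i:ℝ)-1)/m)) :=
          mul_nonneg (slopeF_nonneg gfun_monotoneOn hm h1 h2) (by linarith)
        linarith
      · rw [if_neg hii]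
        rcases lt_or_ge i i0 with hlt | hge
        · have hif : (i:ℝ) ≤ (m:ℝ) * u := by
            have hfl : i ≤ Nat.floor ((m:ℝ)*u) := by omega
            calc (i:ℝ) ≤ (Nat.floor ((m:ℝ)*u) : ℝ) := by exact_mod_cast hfl
              _ ≤ (m:ℝ)*u := Nat.floor_le (by positivity)
          have hiu : (i:ℝ)/m ≤ u := by rw [div_le_iff₀ hm0]; linarith
          have hiu' : ((i:ℝ)-1)/m ≤ u :=
            le_trans ((div_le_div_iff_of_pos_right hm0).2 (by linarith)) hiu
          simp only [hF, hcast, min_eq_right hiu, min_eq_right hiu']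
          have heq : slopeF m i * ((i:ℝ)/m - ((i:ℝ)-1)/m)
              = gfun ((i:ℝ)/m) - gfun (((i:ℝ)-1)/m) := by
            unfold slopeF; field_simp; ring
          linarith
        · have hii0 : ((i0:ℕ):ℝ) ≤ (i:ℝ) - 1 := by
            have h' : i0 ≤ i - 1 := by omega
            have h'' : ((i0:ℕ):ℝ) ≤ ((i-1:ℕ):ℝ) := by exact_mod_cast h'
            rwa [hcast] at h''
          have hu' : u < ((i:ℝ)-1)/m := by
            rw [lt_div_iff₀ hm0]
            have hfl : (m:ℝ)*u < (Nat.floor ((m:ℝ)*u) : ℝ) + 1 := Nat.lt_floor_add_one _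
            have heq : (Nat.floor ((m:ℝ)*u) : ℝ) + 1 = ((i0:ℕ):ℝ) := by
              rw [hi0]; push_cast; ring
            nlinarith [hfl, heq, hii0]
          have hu'' : u ≤ ((i:ℝ))/m :=
            le_trans hu'.le ((div_le_div_iff_of_pos_right hm0).2 (by linarith))
          simp only [hF, hcast, min_eq_left hu'.le, min_eq_left hu'']
          simp
    have hsum2 := Finset.sum_le_sum hstep
    rw [Finset.sum_sub_distrib, tele] at hsum2
    have hite : ∑ i ∈ Icc 1 m, (if i = i0 then 1/(m:ℝ) else 0) ≤ 1/m := by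
      rw [Finset.sum_ite_eq' (Icc 1 m) i0 (fun _ => 1/(m:ℝ))]
      split
      · exact le_rfl
      · positivity
    linarith
  · set w := -u with hw
    have hw0 : 0 < w := by rw [hw]; linarith
    have hsum : ∑ i ∈ Icc 1 m, slopeF m i * (truncAt ((i:ℝ)/m) u - truncAt (((i:ℝ)-1)/m) u)
        = -∑ i ∈ Icc 1 m, slopeF m i * (min w ((i:ℝ)/m) - min w (((i:ℝ)-1)/m)) := by
      rw [← Finset.sum_neg_distrib]
      apply Finset.sum_congr rfl
      intro i hi
      rw [truncAt_of_neg hu, truncAt_of_neg hu]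
      have : -u = w := rfl
      rw [this]; ring
    set F : ℕ → ℝ := fun j => gfun (min w ((j:ℝ)/m)) with hF
    have hterm : ∀ i ∈ Icc 1 m,
        slopeF m i * (min w ((i:ℝ)/m) - min w (((i:ℝ)-1)/m)) ≤ F i - F (i-1) := by
      intro i hi
      obtain ⟨h1, h2⟩ := Finset.mem_Icc.mp hi
      have hcast : ((i - 1 : ℕ) : ℝ) = (i:ℝ) - 1 := by
        have := Nat.cast_sub (R := ℝ) h1; simpa using this
      obtain ⟨hp, hq⟩ := node_mem hm h1 h2
      have hppq : ((i:ℝ)-1)/m < (i:ℝ)/m := by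
        apply div_lt_div_of_pos_right ?_ hm0
        linarith
      rcases le_total w (((i:ℝ)-1)/m) with h | h
      · have e1 : min w (((i:ℝ)-1)/m) = w := min_eq_left h
        have e2 : min w ((i:ℝ)/m) = w := min_eq_left (h.trans hppq.le)
        simp only [hF, hcast, e1, e2]
        simp
      · have hw1 : ((i:ℝ)-1)/m ≤ min w ((i:ℝ)/m) := le_min h hppq.le
        have hw2 : min w ((i:ℝ)/m) ≤ (i:ℝ)/m := min_le_right _ _
        have hchord := concave_chord gfun_concaveOn hp.1 hw1 hw2 hq.2 hppq
        simp only [hF, hcast, min_eq_right h]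
        have hqp' : (m:ℝ) * ((i:ℝ)/m - ((i:ℝ)-1)/m) = 1 := by field_simp; ring
        have h5 := mul_le_mul_of_nonneg_left hchord hm0.le
        calc slopeF m i * (min w ((i:ℝ)/m) - ((i:ℝ)-1)/m)
            = (m:ℝ) * ((gfun ((i:ℝ)/m) - gfun (((i:ℝ)-1)/m)) * (min w ((i:ℝ)/m) - ((i:ℝ)-1)/m)) := by
              unfold slopeF; ring
          _ ≤ (m:ℝ) * ((gfun (min w ((i:ℝ)/m)) - gfun (((i:ℝ)-1)/m)) * ((i:ℝ)/m - ((i:ℝ)-1)/m)) := h5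
          _ = (gfun (min w ((i:ℝ)/m)) - gfun (((i:ℝ)-1)/m)) * ((m:ℝ) * ((i:ℝ)/m - ((i:ℝ)-1)/m)) := by
              ring
          _ = gfun (min w ((i:ℝ)/m)) - gfun (((i:ℝ)-1)/m) := by rw [hqp']; ring
    have hsum2 : ∑ i ∈ Icc 1 m, slopeF m i * (min w ((i:ℝ)/m) - min w (((i:ℝ)-1)/m))
        ≤ F m - F 0 := by
      rw [← sum_Icc_sub_telescope F m]
      exact Finset.sum_le_sum hterm
    have hF0 : F 0 = 0 := by
      simp only [hF, Nat.cast_zero, zero_div, min_eq_right hw0.le]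
      exact gfun_zero
    have hFm : F m ≤ 1 - Real.exp (-w - w^2/2) := by
      simp only [hF, div_self hm0.ne']
      exact gfun_min_le w hw0.le
    have harg : u - u^2/2 = -w - w^2/2 := by rw [hw]; ring
    rw [hsum, harg]
    have h1m : 0 ≤ 1/(m:ℝ) := by positivity
    linarith

/-- Theorem 4.2, inequality (4.3): for a locally square integrable real martingale `M` with
`M 0 = 0` which is heavy on left, for all `x, y > 0`, `a ≥ 0` and `b > 0`,
`P(M n/(a + b[M]_n) ≥ x, [M]_n ≥ y) ≤ exp(−x²(ab + b²y/2))`. -/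
theorem heavyOnLeft_self_normalized_inequality_with_lower_bound
    {Ω : Type*} {m0 : MeasurableSpace Ω} {μ : Measure Ω} [IsProbabilityMeasure μ]
    {ℱ : Filtration ℕ m0} {M : ℕ → Ω → ℝ}
    (hM : Martingale M ℱ μ) (hM0 : M 0 = 0) (hMsq : ∀ n, MemLp (M n) 2 μ)
    (hheavy : Martingale.IsHeavyOnLeft μ ℱ M)
    (n : ℕ) {x y a b : ℝ} (hx : 0 < x) (hy : 0 < y) (ha : 0 ≤ a) (hb : 0 < b) :
    μ {ω | x ≤ M n ω / (a + b * ∑ k ∈ Finset.Icc 1 n, (M k ω - M (k - 1) ω) ^ 2) ∧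
        y ≤ ∑ k ∈ Finset.Icc 1 n, (M k ω - M (k - 1) ω) ^ 2}
      ≤ ENNReal.ofReal (Real.exp (-x ^ 2 * (a * b + b ^ 2 * y / 2))) := by
  classical
  set t : ℝ := x * b with htdef
  have ht : 0 < t := mul_pos hx hb
  set d : ℕ → Ω → ℝ := fun k ω => M k ω - M (k-1) ω with hd
  set G : ℕ → Ω → ℝ := fun k ω => Real.exp (t * d k ω - (t * d k ω)^2/2) with hG
  set V : ℕ → Ω → ℝ := fun N ω => ∏ k ∈ Icc 1 N, G k ω with hV
  have hGpos : ∀ k ω, 0 < G k ω := fun k ω => Real.exp_pos _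
  have hGle : ∀ k ω, G k ω ≤ Real.exp (1/2) := fun k ω => Real.exp_le_exp.2 (expArg_le_half _)
  have hVpos : ∀ N ω, 0 < V N ω := fun N ω => Finset.prod_pos (fun k _ => hGpos k ω)
  have hVle : ∀ N ω, V N ω ≤ Real.exp (1/2) ^ N := by
    intro N ω
    calc V N ω ≤ ∏ k ∈ Icc 1 N, Real.exp (1/2) :=
          Finset.prod_le_prod (fun k _ => (hGpos k ω).le) (fun k _ => hGle k ω)
      _ = Real.exp (1/2) ^ N := by rw [Finset.prod_const, Nat.card_Icc]; norm_num
  have hd_meas : ∀ k, StronglyMeasurable[ℱ k] (d k) :=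
    fun k => (hM.stronglyAdapted k).sub ((hM.stronglyAdapted (k-1)).mono (ℱ.mono (Nat.sub_le k 1)))
  have hG_meas : ∀ k, StronglyMeasurable[ℱ k] (G k) := by
    intro k
    have h1 : Measurable[ℱ k] fun ω => t * d k ω := (hd_meas k).measurable.const_mul t
    exact (Real.measurable_exp.comp (h1.sub ((h1.pow_const 2).div_const 2))).stronglyMeasurable
  have hV_meas : ∀ N, StronglyMeasurable[ℱ N] (V N) := by
    intro N
    apply Finset.stronglyMeasurable_fun_prod
    intro k hk
    exact (hG_meas k).mono (ℱ.mono (Finset.mem_Icc.mp hk).2)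
  have hint_of_bdd : ∀ (f : Ω → ℝ) (C : ℝ), AEStronglyMeasurable f μ →
      (∀ ω, |f ω| ≤ C) → Integrable f μ := by
    intro f C hmeas hbd
    exact Integrable.mono' (integrable_const C) hmeas
      (ae_of_all _ (by simpa [Real.norm_eq_abs] using hbd))
  have hVint : ∀ N, Integrable (V N) μ := by
    intro N
    refine hint_of_bdd _ (Real.exp (1/2) ^ N) (((hV_meas N).mono (ℱ.le N)).aestronglyMeasurable)
      (fun ω => ?_)
    rw [abs_of_pos (hVpos N ω)]; exact hVle N ω
  have hGint : ∀ k, Integrable (G k) μ := by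
    intro k
    refine hint_of_bdd _ (Real.exp (1/2)) (((hG_meas k).mono (ℱ.le k)).aestronglyMeasurable)
      (fun ω => ?_)
    rw [abs_of_pos (hGpos k ω)]; exact hGle k ω
  have hVGint : ∀ N, Integrable (V N * G (N+1)) μ := by
    intro N
    refine hint_of_bdd _ (Real.exp (1/2) ^ N * Real.exp (1/2))
      ((((hV_meas N).mono (ℱ.le N)).mul ((hG_meas (N+1)).mono (ℱ.le (N+1)))).aestronglyMeasurable)
      (fun ω => ?_)
    have := mul_le_mul (hVle N ω) (hGle (N+1) ω) (hGpos (N+1) ω).le (by positivity)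
    rwa [Pi.mul_apply, abs_of_pos (mul_pos (hVpos N ω) (hGpos (N+1) ω))]
  -- the key conditional expectation step
  have hstep : ∀ N : ℕ, ∀ᵐ ω ∂μ, (μ[G (N+1)|ℱ N]) ω ≤ 1 := by
    intro N
    have hboundm : ∀ m : ℕ, 1 ≤ m → ∀ᵐ ω ∂μ, (μ[G (N+1)|ℱ N]) ω ≤ 1 + 1/m := by
      intro m hm1
      have hm0 : (0:ℝ) < m := by exact_mod_cast hm1
      set ψ : ℕ → Ω → ℝ := fun j ω => truncAt ((j:ℝ)/(m*t)) (d (N+1) ω) with hψ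
      have hnodes : ∀ j : ℕ, (0:ℝ) ≤ (j:ℝ)/(m*t) := fun j => by positivity
      have hψmeas : ∀ j, AEStronglyMeasurable (ψ j) μ := fun j =>
        (((measurable_truncAt _).comp
          (((hd_meas (N+1)).mono (ℱ.le _)).measurable))).stronglyMeasurable.aestronglyMeasurable
      have hψint : ∀ j, Integrable (ψ j) μ := fun j =>
        hint_of_bdd _ _ (hψmeas j) (fun ω => abs_truncAt_le _ _ (hnodes j))
      have hψ0 : ψ 0 = 0 := by
        funext ω; simp only [hψ, Nat.cast_zero, zero_div]; exact truncAt_zero _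
      set Sf : Ω → ℝ := ∑ i ∈ Icc 1 m, (slopeF m i * t) • (ψ i - ψ (i-1)) with hSf
      have hSint_i : ∀ i ∈ Icc 1 m, Integrable ((slopeF m i * t) • (ψ i - ψ (i-1))) μ :=
        fun i _ => ((hψint i).sub (hψint (i-1))).smul (slopeF m i * t)
      have hSint : Integrable Sf μ := integrable_finset_sum' _ hSint_i
      set RHS : Ω → ℝ := (fun _ => 1 + 1/(m:ℝ)) + Sf with hRHS
      have hRHSint : Integrable RHS μ := (integrable_const _).add hSint
      -- pointwise bound
      have hpt : ∀ ω, G (N+1) ω ≤ RHS ω := by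
        intro ω
        have hkey := key_pointwise m hm1 (t * d (N+1) ω)
        have hterm : ∀ i ∈ Icc 1 m,
            slopeF m i * (truncAt ((i:ℝ)/m) (t * d (N+1) ω)
              - truncAt (((i:ℝ)-1)/m) (t * d (N+1) ω))
            = (slopeF m i * t) * (ψ i ω - ψ (i-1) ω) := by
          intro i hi
          obtain ⟨h1, h2⟩ := Finset.mem_Icc.mp hi
          obtain ⟨hp, hq⟩ := node_mem hm1 h1 h2
          have hcast : ((i - 1 : ℕ) : ℝ) = (i:ℝ) - 1 := by
            have := Nat.cast_sub (R := ℝ) h1; simpa using this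
          rw [truncAt_mul ht hq.1, truncAt_mul ht hp.1]
          simp only [hψ, div_div, hcast]
          ring
        rw [Finset.sum_congr rfl hterm] at hkey
        simpa only [hRHS, hG, Pi.add_apply, hSf, Finset.sum_apply, Pi.smul_apply, Pi.sub_apply,
          smul_eq_mul, add_assoc] using hkey
      have hmono := condExp_mono (m := ℱ N) (hGint (N+1)) hRHSint (ae_of_all _ hpt)
      have hadd := condExp_add (μ := μ) (m := ℱ N) (integrable_const (1 + 1/(m:ℝ))) hSint
      have hsum := condExp_finset_sum (μ := μ) (m := ℱ N) hSint_i
      have htermae : ∀ i, i ∈ Icc 1 m → (μ[(slopeF m i * t) • (ψ i - ψ (i-1))|ℱ N]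
          =ᵐ[μ] fun ω => (slopeF m i * t) * ((μ[ψ i|ℱ N]) ω - (μ[ψ (i-1)|ℱ N]) ω)) := by
        intro i _
        refine (condExp_smul _ _ _).trans ?_
        have h := condExp_sub (μ := μ) (m := ℱ N) (hψint i) (hψint (i-1))
        filter_upwards [h] with ω hω
        simp only [Pi.smul_apply, smul_eq_mul, hω, Pi.sub_apply]
      have hD : ∀ᵐ ω ∂μ, ∀ i, i ∈ Icc 1 m →
          (μ[(slopeF m i * t) • (ψ i - ψ (i-1))|ℱ N]) ω
            = (slopeF m i * t) * ((μ[ψ i|ℱ N]) ω - (μ[ψ (i-1)|ℱ N]) ω) := by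
        rw [ae_all_iff]
        intro i
        by_cases hi : i ∈ Icc 1 m
        · filter_upwards [htermae i hi] with ω h
          exact fun _ => h
        · filter_upwards with ω h
          exact absurd h hi
      have hE : ∀ᵐ ω ∂μ, ∀ i, i ∈ Icc 1 m → (μ[ψ i|ℱ N]) ω ≤ 0 := by
        rw [ae_all_iff]
        intro i
        by_cases hi : i ∈ Icc 1 m
        · obtain ⟨h1, h2⟩ := Finset.mem_Icc.mp hi
          have hipos : (0:ℝ) < (i:ℝ)/(m*t) := by
            have : (0:ℝ) < (i:ℝ) := by exact_mod_cast h1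
            positivity
          have := hheavy (N+1) (by omega) ((i:ℝ)/(m*t)) hipos
          simp only [Nat.add_sub_cancel] at this
          filter_upwards [this] with ω h _
          exact h
        · filter_upwards with ω h
          exact absurd h hi
      filter_upwards [hmono, hadd, hsum, hD, hE] with ω h1 h2 h3 h4 h5
      have hc0 : (μ[ψ 0|ℱ N]) ω = 0 := by
        rw [hψ0, condExp_zero]; rfl
      have habel := abel_nonpos m (fun i => slopeF m i * t) (fun j => (μ[ψ j|ℱ N]) ω)
        hc0 (fun i hi1 hi2 => h5 i (Finset.mem_Icc.mpr ⟨hi1, hi2⟩))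
        (fun i hi1 hi2 => mul_nonneg (slopeF_nonneg gfun_monotoneOn hm1 hi1 (by omega)) ht.le)
        (fun i hi1 hi2 => mul_le_mul_of_nonneg_right
          (slopeF_antitone gfun_concaveOn hm1 hi1 hi2) ht.le)
      have e1 : (μ[RHS|ℱ N]) ω = (1 + 1/(m:ℝ)) + (μ[Sf|ℱ N]) ω := by
        rw [h2]; simp [condExp_const (ℱ.le N)]
      have e2 : (μ[Sf|ℱ N]) ω
          = ∑ i ∈ Icc 1 m, (μ[(slopeF m i * t) • (ψ i - ψ (i-1))|ℱ N]) ω := by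
        rw [h3]; exact Finset.sum_apply _ _ _
      have e3 : ∑ i ∈ Icc 1 m, (μ[(slopeF m i * t) • (ψ i - ψ (i-1))|ℱ N]) ω
          = ∑ i ∈ Icc 1 m, (slopeF m i * t) * ((μ[ψ i|ℱ N]) ω - (μ[ψ (i-1)|ℱ N]) ω) :=
        Finset.sum_congr rfl h4
      calc (μ[G (N+1)|ℱ N]) ω ≤ (μ[RHS|ℱ N]) ω := h1
        _ = (1 + 1/(m:ℝ)) + ∑ i ∈ Icc 1 m,
              (slopeF m i * t) * ((μ[ψ i|ℱ N]) ω - (μ[ψ (i-1)|ℱ N]) ω) := by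
            rw [e1, e2, e3]
        _ ≤ 1 + 1/(m:ℝ) := by linarith [habel]
    have hall : ∀ᵐ ω ∂μ, ∀ m : ℕ, (μ[G (N+1)|ℱ N]) ω ≤ 1 + 1/(m+1:ℕ) := by
      rw [ae_all_iff]
      intro m
      exact hboundm (m+1) (by omega)
    filter_upwards [hall] with ω hω
    by_contra hlt
    push_neg at hlt
    obtain ⟨m, hm⟩ := exists_nat_one_div_lt (by linarith : (0:ℝ) < (μ[G (N+1)|ℱ N]) ω - 1)
    have h2 := hω m
    have : ((m+1 : ℕ) : ℝ) = (m : ℝ) + 1 := by push_cast; ring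
    rw [this] at h2
    linarith
  -- integral bound by induction
  have hVint1 : ∀ N, ∫ ω, V N ω ∂μ ≤ 1 := by
    intro N
    induction N with
    | zero =>
      simp only [hV, Icc_self, Icc_eq_empty_of_lt, Finset.prod_empty]
      norm_num
    | succ N ih =>
      have hVsucc : (V (N+1)) = V N * G (N+1) := by
        funext ω
        exact Finset.prod_Icc_succ_top (by omega) _
      have hpull := condExp_mul_of_stronglyMeasurable_left (hV_meas N)
        (hVsucc ▸ hVint (N+1)) (hGint (N+1))
      calc ∫ ω, V (N+1) ω ∂μ = ∫ ω, (V N * G (N+1)) ω ∂μ := by rw [hVsucc]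
        _ = ∫ ω, (μ[V N * G (N+1)|ℱ N]) ω ∂μ := (integral_condExp (ℱ.le N)).symm
        _ ≤ ∫ ω, V N ω ∂μ := ?_
        _ ≤ 1 := ih
      apply integral_mono_ae integrable_condExp (hVint N)
      filter_upwards [hpull, hstep N] with ω h1 h2
      rw [h1]
      calc V N ω * (μ[G (N+1)|ℱ N]) ω ≤ V N ω * 1 :=
            mul_le_mul_of_nonneg_left h2 (hVpos N ω).le
        _ = V N ω := mul_one _
  -- final assembly
  set S : Ω → ℝ := fun ω => ∑ k ∈ Finset.Icc 1 n, (M k ω - M (k-1) ω)^2 with hS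
  set c : ℝ := x^2*(a*b + b^2*y/2) with hc
  have hsub : {ω | x ≤ M n ω / (a + b * S ω) ∧ y ≤ S ω} ⊆ {ω | Real.exp c ≤ V n ω} := by
    intro ω hω
    obtain ⟨h1, h2⟩ := hω
    have hSy : y ≤ S ω := h2
    have hden : 0 < a + b * S ω := by nlinarith
    have hMn : x * (a + b * S ω) ≤ M n ω := by
      rw [le_div_iff₀ hden] at h1; linarith
    have hVeq : V n ω = Real.exp (t * M n ω - t^2 * S ω / 2) := by
      rw [hV]
      dsimp only
      rw [← Real.exp_sum]
      congr 1
      rw [Finset.sum_sub_distrib]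
      have e1 : ∑ k ∈ Icc 1 n, t * d k ω = t * M n ω := by
        rw [← Finset.mul_sum]
        have := sum_Icc_sub_telescope (fun k => M k ω) n
        rw [hd]
        simp only
        rw [this, hM0]
        simp
      have e2 : ∑ k ∈ Icc 1 n, (t * d k ω)^2/2 = t^2 * S ω / 2 := by
        rw [hS]
        simp only
        rw [Finset.mul_sum, Finset.sum_div]
        apply Finset.sum_congr rfl
        intro k _
        ring
      rw [e1, e2]
    show Real.exp c ≤ V n ω
    rw [hVeq]
    apply Real.exp_le_exp.2
    have hSnn : 0 ≤ S ω := le_trans hy.le hSy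
    rw [hc, htdef]
    nlinarith [mul_le_mul_of_nonneg_left hMn ht.le, sq_nonneg x, sq_nonneg b,
      mul_le_mul_of_nonneg_left hSy (by positivity : (0:ℝ) ≤ x^2*b^2/2)]
  have hmarkov := mul_meas_ge_le_integral_of_nonneg
    (ae_of_all μ (fun ω => (hVpos n ω).le)) (hVint n) (Real.exp c)
  have hmeas_ne_top : μ {ω | Real.exp c ≤ V n ω} ≠ ⊤ := measure_ne_top _ _
  have htoReal : (μ {ω | Real.exp c ≤ V n ω}).toReal ≤ Real.exp (-c) := by
    have hint1 : ∫ ω, V n ω ∂μ ≤ 1 := hVint1 n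
    have hepos : (0:ℝ) < Real.exp c := Real.exp_pos _
    have hT : Real.exp c * (μ {ω | Real.exp c ≤ V n ω}).toReal ≤ 1 := le_trans hmarkov hint1
    have h2 : (μ {ω | Real.exp c ≤ V n ω}).toReal ≤ 1 / Real.exp c := by
      rw [le_div_iff₀ hepos]; linarith
    calc (μ {ω | Real.exp c ≤ V n ω}).toReal ≤ 1 / Real.exp c := h2
      _ = Real.exp (-c) := by rw [Real.exp_neg, one_div]
  calc μ {ω | x ≤ M n ω / (a + b * S ω) ∧ y ≤ S ω}
      ≤ μ {ω | Real.exp c ≤ V n ω} := measure_mono hsub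
    _ = ENNReal.ofReal ((μ {ω | Real.exp c ≤ V n ω}).toReal) :=
        (ENNReal.ofReal_toReal hmeas_ne_top).symm
    _ ≤ ENNReal.ofReal (Real.exp (-c)) := ENNReal.ofReal_le_ofReal htoReal
    _ = ENNReal.ofReal (Real.exp (-x ^ 2 * (a * b + b ^ 2 * y / 2))) := by rw [hc]; ring_nf
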